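/- (Lemma 4) Let f : X → X be a non-expansive bijection. Then for every n ∈ ℕ, the restriction of f to [a n, b n] ∩ X is an isometry of [a n, b n] ∩ X onto [a n, b n] ∩ X. -/

import Mathlib

open Set

/-- In a set of reals that is `d`-separated, the elements below `x` have a maximum
(provided there is at least one). -/
lemma stmt8_sep_max (d x t0 : ℝ) (s : Set ℝ) (hd : 0 < d)
    (ht0s : t0 ∈ s) (ht0 : t0 < x)
    (hsep : ∀ t ∈ s, ∀ u ∈ s, t < u → d < u - t) :
    ∃ N ∈ s, N < x ∧ ∀ t ∈ s, t < x → t ≤ N := by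
  by_contra h
  push_neg at h
  have step : ∀ u : {u : ℝ // u ∈ s ∧ u < x},
      ∃ v : {u : ℝ // u ∈ s ∧ u < x}, (u : ℝ) + d < (v : ℝ) := by
    rintro ⟨u, hus, hux⟩
    obtain ⟨t, hts, htx, hut⟩ := h u hus hux
    have hlt' : u < t := hut
    have := hsep u hus t hts hlt'
    exact ⟨⟨t, hts, htx⟩, by simp only; linarith⟩
  choose F hF using step
  set u0 : {u : ℝ // u ∈ s ∧ u < x} := ⟨t0, ht0s, ht0⟩ with hu0
  have hg : ∀ i : ℕ, t0 + i * d ≤ ((F^[i] u0 : {u : ℝ // u ∈ s ∧ u < x}) : ℝ) := by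
    intro i
    induction i with
    | zero => simp [hu0]
    | succ i ih =>
      have h2 : ((F^[i] u0 : {u : ℝ // u ∈ s ∧ u < x}) : ℝ) + d
          < ((F^[i+1] u0 : {u : ℝ // u ∈ s ∧ u < x}) : ℝ) := by
        rw [Function.iterate_succ_apply']
        exact hF _
      push_cast
      push_cast at ih
      linarith
  obtain ⟨i, hi⟩ := exists_nat_gt ((x - t0) / d)
  have h1 := hg i
  have h2 := (F^[i] u0).2.2
  have h3 : (x - t0) / d * d < (i : ℝ) * d := mul_lt_mul_of_pos_right hi hd
  rw [div_mul_cancel₀ _ (ne_of_gt hd)] at h3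
  linarith

/-- "Every neighborhood of `x` meets `X` in an uncountable set." -/
def stmt8_Unc (X : Set ℝ) (x : ℝ) : Prop :=
  ∀ ε > 0, ¬ (X ∩ Set.Ioo (x - ε) (x + ε)).Countable

theorem stmt8
    (a b : ℕ → ℝ)
    (hlt : ∀ n, a n < b n)
    (haq : ∀ n, ∃ q : ℚ, (q : ℝ) = a n)
    (hbq : ∀ n, ∃ q : ℚ, (q : ℝ) = b n)
    (hdisj : ∀ i j, i ≠ j → Disjoint (Set.Icc (a i) (b i)) (Set.Icc (a j) (b j)))
    (hhalf : ∀ n, 2 * (b (n + 1) - a (n + 1)) < b n - a n)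
    (hgap : ∀ i j, b i < a j → a j - b i > b 0 - a 0)
    (h01 : a 0 < a 1)
    (hcof : ∀ x : ℝ, ∃ k l, b k < x ∧ x < a l)
    (m : ℕ → ℕ)
    (hm : ∀ n, b n < a (m n))
    (hmgap : ∀ n, Disjoint (Set.Ioo (b n) (a (m n))) (⋃ k, Set.Icc (a k) (b k)))
    (A : ℕ → Set ℝ)
    (hA : ∀ n, A n ⊆ Set.Ioo (b n) (a (m n)))
    (hAcard : ∀ n, ∀ U : Set ℝ, IsOpen U → U.Nonempty → U ⊆ Set.Ioo (b n) (a (m n)) →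
      Cardinal.mk ↥(A n ∩ U) = Cardinal.aleph 1)
    (X : Set ℝ)
    (hX : X = ⋃ n, (({x : ℝ | ∃ q : ℚ, (q : ℝ) = x} ∩ Set.Icc (a n) (b n)) ∪ A n))
    (f : ℝ → ℝ)
    (hbij : Set.BijOn f X X)
    (hne : ∀ x ∈ X, ∀ y ∈ X, |f x - f y| ≤ |x - y|) :
    ∀ n : ℕ,
      Set.BijOn f (Set.Icc (a n) (b n) ∩ X) (Set.Icc (a n) (b n) ∩ X) ∧
      ∀ x ∈ Set.Icc (a n) (b n) ∩ X, ∀ y ∈ Set.Icc (a n) (b n) ∩ X,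
        |f x - f y| = |x - y| := by
  classical
  set d0 : ℝ := b 0 - a 0 with hd0def
  have hlen : ∀ n, 0 < b n - a n := fun n => sub_pos.2 (hlt n)
  have hd0 : 0 < d0 := hlen 0
  have hlen_le : ∀ k j, k ≤ j → b j - a j ≤ b k - a k := by
    intro k j hkj
    induction j, hkj using Nat.le_induction with
    | base => exact le_rfl
    | succ j hkj ih =>
      have := hhalf j
      have := hlen (j + 1)
      linarith
  -- pointwise separation between distinct intervals
  have hsep : ∀ j k, j ≠ k → ∀ u ∈ Icc (a j) (b j), ∀ v ∈ Icc (a k) (b k),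
      d0 < |u - v| := by
    intro j k hjk u hu v hv
    have hcase : b j < a k ∨ b k < a j := by
      by_contra hc
      push_neg at hc
      obtain ⟨h1, h2⟩ := hc
      have hp : max (a j) (a k) ∈ Icc (a j) (b j) ∩ Icc (a k) (b k) := by
        constructor
        · exact ⟨le_max_left _ _, max_le (hlt j).le h1⟩
        · exact ⟨le_max_right _ _, max_le h2 (hlt k).le⟩
      exact Set.disjoint_left.mp (hdisj j k hjk) hp.1 hp.2
    rcases hcase with h | h
    · have h1 : u ≤ b j := hu.2
      have h2 : a k ≤ v := hv.1
      have := hgap j k h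
      rw [abs_sub_comm, abs_of_nonneg (by linarith)]
      linarith
    · have h1 : v ≤ b k := hv.2
      have h2 : a j ≤ u := hu.1
      have := hgap k j h
      rw [abs_of_nonneg (by linarith)]
      linarith
  -- membership lemmas for X
  have hQX : ∀ n (q : ℝ), (∃ r : ℚ, (r : ℝ) = q) → q ∈ Icc (a n) (b n) → q ∈ X := by
    intro n q hq hmem
    rw [hX]
    exact mem_iUnion.2 ⟨n, Or.inl ⟨hq, hmem⟩⟩
  have hAX : ∀ n, A n ⊆ X := by
    intro n x hx
    rw [hX]
    exact mem_iUnion.2 ⟨n, Or.inr hx⟩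
  have hXIcc : ∀ n x, x ∈ X → x ∈ Icc (a n) (b n) → ∃ r : ℚ, (r : ℝ) = x := by
    intro n x hxX hxI
    rw [hX] at hxX
    obtain ⟨k, hk⟩ := mem_iUnion.1 hxX
    rcases hk with ⟨hr, _⟩ | hAk
    · exact hr
    · exact absurd (mem_iUnion.2 ⟨n, hxI⟩)
        (Set.disjoint_left.mp (hmgap k) (hA k hAk))
  -- a point outside all intervals lies in some gap
  have hgapcover : ∀ x : ℝ, (∀ k, x ∉ Icc (a k) (b k)) →
      ∃ N, x ∈ Ioo (b N) (a (m N)) := by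
    intro x hx
    obtain ⟨k0, _, hk0, _⟩ := hcof x
    have hsepb : ∀ t ∈ Set.range b, ∀ u ∈ Set.range b, t < u → d0 < u - t := by
      rintro t ⟨j, rfl⟩ u ⟨k, rfl⟩ htu
      have hjk : j ≠ k := by rintro rfl; exact lt_irrefl _ htu
      have := hsep j k hjk (b j) ⟨(hlt j).le, le_refl _⟩ (b k) ⟨(hlt k).le, le_refl _⟩
      rwa [abs_sub_comm, abs_of_nonneg (by linarith)] at this
    obtain ⟨t, ⟨N, rfl⟩, htx, hmax⟩ :=
      stmt8_sep_max d0 x (b k0) (Set.range b) hd0 ⟨k0, rfl⟩ hk0 hsepb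
    refine ⟨N, htx, ?_⟩
    by_contra hc
    push_neg at hc
    have hxnot := hx (m N)
    have hbmN : b (m N) < x := by
      by_contra hc2
      push_neg at hc2
      exact hxnot ⟨hc, hc2⟩
    have := hmax (b (m N)) ⟨m N, rfl⟩ hbmN
    have := hm N
    have := hlt (m N)
    linarith
  -- uncountability facts
  have hUncSub : ∀ n (U : Set ℝ), IsOpen U → U.Nonempty → U ⊆ Ioo (b n) (a (m n)) →
      ∀ V : Set ℝ, A n ∩ U ⊆ V → ¬ V.Countable := by
    intro n U hUo hUne hUsub V hsub hc
    have h1 := hAcard n U hUo hUne hUsub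
    have h2 : (A n ∩ U).Countable := hc.mono hsub
    rw [Cardinal.countable_iff_lt_aleph_one] at h2
    rw [h1] at h2
    exact lt_irrefl _ h2
  have hUb : ∀ n, stmt8_Unc X (b n) := by
    intro n ε hε
    set U : Set ℝ := Ioo (b n) (min (a (m n)) (b n + ε)) with hU
    have hUo : IsOpen U := isOpen_Ioo
    have hUne : U.Nonempty := ⟨min (a (m n)) (b n + ε) / 2 + b n / 2, by
      constructor
      · have h1 := hm n
        have : b n < min (a (m n)) (b n + ε) := lt_min h1 (by linarith)
        linarith
      · have h1 := hm n
        have : b n < min (a (m n)) (b n + ε) := lt_min h1 (by linarith)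
        linarith⟩
    have hUsub : U ⊆ Ioo (b n) (a (m n)) := fun y hy =>
      ⟨hy.1, lt_of_lt_of_le hy.2 (min_le_left _ _)⟩
    refine hUncSub n U hUo hUne hUsub _ ?_
    rintro y ⟨hyA, hyU⟩
    exact ⟨hAX n hyA, by
      constructor
      · have := hyU.1; linarith
      · exact lt_of_lt_of_le hyU.2 (le_trans (min_le_right _ _) (le_refl _))⟩
  have hUA : ∀ n, ∀ x ∈ A n, stmt8_Unc X x := by
    intro n x hx ε hε
    obtain ⟨hx1, hx2⟩ := hA n hx
    set U : Set ℝ := Ioo (max (b n) (x - ε)) (min (a (m n)) (x + ε)) with hU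
    have hUo : IsOpen U := isOpen_Ioo
    have hUne : U.Nonempty := ⟨x, ⟨max_lt hx1 (by linarith), lt_min hx2 (by linarith)⟩⟩
    have hUsub : U ⊆ Ioo (b n) (a (m n)) := fun y hy =>
      ⟨lt_of_le_of_lt (le_max_left _ _) hy.1, lt_of_lt_of_le hy.2 (min_le_left _ _)⟩
    refine hUncSub n U hUo hUne hUsub _ ?_
    rintro y ⟨hyA, hyU⟩
    exact ⟨hAX n hyA,
      ⟨lt_of_le_of_lt (le_max_right _ _) hyU.1,
       lt_of_lt_of_le hyU.2 (min_le_right _ _)⟩⟩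
  have hUa : ∀ n, stmt8_Unc X (a n) := by
    intro n ε hε
    set δ : ℝ := min ε d0 with hδdef
    have hδ : 0 < δ := lt_min hε hd0
    have hδd0 : δ ≤ d0 := min_le_right _ _
    have hδε : δ ≤ ε := min_le_left _ _
    set x0 : ℝ := a n - δ / 2 with hx0def
    have hx0 : ∀ k, x0 ∉ Icc (a k) (b k) := by
      intro k hk
      by_cases hkn : k = n
      · subst hkn
        have := hk.1
        simp only [hx0def] at this
        linarith
      · have := hsep k n hkn x0 hk (a n) ⟨le_refl _, (hlt n).le⟩
        have habs : |x0 - a n| = δ / 2 := by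
          rw [abs_of_nonpos (by simp only [hx0def]; linarith), hx0def]
          ring
        rw [habs] at this
        linarith
    obtain ⟨N, hN1, hN2⟩ := hgapcover x0 hx0
    set U : Set ℝ := Ioo (max (b N) (a n - δ)) (min (a (m N)) (a n)) with hU
    have hUo : IsOpen U := isOpen_Ioo
    have hUne : U.Nonempty := ⟨x0, ⟨max_lt hN1 (by simp only [hx0def]; linarith),
      lt_min hN2 (by simp only [hx0def]; linarith)⟩⟩
    have hUsub : U ⊆ Ioo (b N) (a (m N)) := fun y hy =>
      ⟨lt_of_le_of_lt (le_max_left _ _) hy.1, lt_of_lt_of_le hy.2 (min_le_left _ _)⟩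
    refine hUncSub N U hUo hUne hUsub _ ?_
    rintro y ⟨hyA, hyU⟩
    refine ⟨hAX N hyA, ?_, ?_⟩
    · have := lt_of_le_of_lt (le_max_right _ _) hyU.1
      linarith
    · have := lt_of_lt_of_le hyU.2 (min_le_right _ _)
      linarith
  -- light points
  have hLight : ∀ k (x : ℝ), x ∈ Ioo (a k) (b k) →
      ∃ ε > 0, (X ∩ Ioo (x - ε) (x + ε)).Countable := by
    intro k x hx
    refine ⟨min (x - a k) (b k - x), lt_min (by linarith [hx.1]) (by linarith [hx.2]), ?_⟩
    have hsub : X ∩ Ioo (x - min (x - a k) (b k - x)) (x + min (x - a k) (b k - x)) ⊆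
        Set.range ((↑) : ℚ → ℝ) := by
      rintro y ⟨hyX, hy1, hy2⟩
      have h1 : a k ≤ y := by
        have := min_le_left (x - a k) (b k - x)
        linarith
      have h2 : y ≤ b k := by
        have := min_le_right (x - a k) (b k - x)
        linarith
      obtain ⟨r, hr⟩ := hXIcc k y hyX ⟨h1, h2⟩
      exact ⟨r, hr⟩
    exact (Set.countable_range _).mono hsub
  -- f preserves uncountable density points
  have hUncMap : ∀ x ∈ X, stmt8_Unc X x → stmt8_Unc X (f x) := by
    intro x hx hU ε hε hcnt
    refine hU ε hε ?_
    refine Set.countable_of_injective_of_countable_image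
      (hbij.injOn.mono (inter_subset_left)) (hcnt.mono ?_)
    rintro y ⟨z, ⟨hzX, hz1, hz2⟩, rfl⟩
    refine ⟨hbij.mapsTo hzX, ?_⟩
    have := hne z hzX x hx
    have habs : |z - x| < ε := abs_lt.2 ⟨by linarith, by linarith⟩
    have h2 : |f z - f x| < ε := lt_of_le_of_lt this habs
    obtain ⟨h3, h4⟩ := abs_lt.1 h2
    exact ⟨by linarith, by linarith⟩
  -- images of dense points avoid interval interiors
  have hHeavyPt : ∀ x ∈ X, stmt8_Unc X x → ∀ j, f x ∉ Ioo (a j) (b j) := by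
    intro x hx hU j hmem
    obtain ⟨ε, hε, hcnt⟩ := hLight j (f x) hmem
    exact hUncMap x hx hU ε hε hcnt
  have haX : ∀ n, a n ∈ X := fun n => hQX n _ (haq n) ⟨le_refl _, (hlt n).le⟩
  have hbX : ∀ n, b n ∈ X := fun n => hQX n _ (hbq n) ⟨(hlt n).le, le_refl _⟩
  -- main dichotomy by strong induction
  have main : ∀ n : ℕ,
      (∀ x ∈ Icc (a n) (b n) ∩ X, f x = x) ∨
      (∀ x ∈ Icc (a n) (b n) ∩ X, f x = a n + b n - x) := by
    intro n
    induction n using Nat.strong_induction_on with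
    | _ n IH =>
    set e : ℝ := b (n + 1) - a (n + 1) with hedef
    have hepos : 0 < e := hlen (n + 1)
    have hehalf : 2 * e < b n - a n := hhalf n
    -- preimages of central rational points lie in the same interval
    have hpre : ∀ q : ℝ, (∃ r : ℚ, (r : ℝ) = q) → a n + e < q → q < b n - e →
        ∃ x, x ∈ Icc (a n) (b n) ∩ X ∧ f x = q := by
      intro q hq hq1 hq2
      have hqIoo : q ∈ Ioo (a n) (b n) := ⟨by linarith, by linarith⟩
      have hqX : q ∈ X := hQX n q hq ⟨hqIoo.1.le, hqIoo.2.le⟩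
      obtain ⟨x, hxX, hfx⟩ := hbij.surjOn hqX
      have hxnotU : ¬ stmt8_Unc X x := by
        intro hU
        obtain ⟨ε, hε, hcnt⟩ := hLight n q hqIoo
        refine hUncMap x hxX hU ε hε ?_
        rwa [hfx]
      have hxX' := hxX
      rw [hX] at hxX'
      obtain ⟨k, hk⟩ := mem_iUnion.1 hxX'
      rcases hk with ⟨hrat, hIcck⟩ | hAk
      · -- x rational in interval k
        have hxa : x ≠ a k := by
          rintro rfl
          exact hxnotU (hUa k)
        have hxb : x ≠ b k := by
          rintro rfl
          exact hxnotU (hUb k)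
        have hxIoo : x ∈ Ioo (a k) (b k) :=
          ⟨lt_of_le_of_ne hIcck.1 (Ne.symm hxa), lt_of_le_of_ne hIcck.2 hxb⟩
        rcases lt_trichotomy k n with hkn | rfl | hnk
        · -- impossible: f maps interval k into itself by IH
          exfalso
          have hfmem : f x ∈ Icc (a k) (b k) := by
            rcases IH k hkn with hid | hrefl
            · rw [hid x ⟨hIcck, hxX⟩]; exact hIcck
            · rw [hrefl x ⟨hIcck, hxX⟩]
              exact ⟨by linarith [hIcck.2], by linarith [hIcck.1]⟩
          rw [hfx] at hfmem
          exact Set.disjoint_left.mp (hdisj k n (Nat.ne_of_lt hkn)) hfmem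
            ⟨hqIoo.1.le, hqIoo.2.le⟩
        · exact ⟨x, ⟨hIcck, hxX⟩, hfx⟩
        · -- impossible: interval k is too short, so f (a k) would be interior
          exfalso
          have h1 := hne (a k) (haX k) x hxX
          rw [hfx] at h1
          have h2 : |a k - x| ≤ e := by
            rw [abs_of_nonpos (by linarith [hIcck.1])]
            have := hlen_le (n + 1) k hnk
            have := hIcck.2
            simp only [hedef]
            linarith [hIcck.1, hIcck.2]
          have h3 : |f (a k) - q| ≤ e := le_trans h1 h2
          obtain ⟨h4, h5⟩ := abs_le.1 h3
          exact hHeavyPt (a k) (haX k) (hUa k) n ⟨by linarith, by linarith⟩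
      · exfalso
        exact hxnotU (hUA k x hAk)
    -- the endpoints' images avoid the open interval
    have hα := hHeavyPt (a n) (haX n) (hUa n) n
    have hβ := hHeavyPt (b n) (hbX n) (hUb n) n
    have hαcase : f (a n) ≤ a n ∨ b n ≤ f (a n) := by
      by_contra hc
      push_neg at hc
      exact hα ⟨hc.1, hc.2⟩
    have hβcase : f (b n) ≤ a n ∨ b n ≤ f (b n) := by
      by_contra hc
      push_neg at hc
      exact hβ ⟨hc.1, hc.2⟩
    have hαβ : |f (a n) - f (b n)| ≤ b n - a n := by
      have := hne (a n) (haX n) (b n) (hbX n)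
      rwa [abs_of_nonpos (show a n - b n ≤ 0 by linarith [hlt n]), neg_sub] at this
    have hmid1 : (a n + b n) / 2 < b n - e := by linarith
    have hmid2 : a n + e < (a n + b n) / 2 := by linarith
    obtain ⟨q1, hq1a, hq1b⟩ := exists_rat_btwn hmid1
    obtain ⟨q2, hq2a, hq2b⟩ := exists_rat_btwn hmid2
    obtain ⟨x1, ⟨hx1I, hx1X⟩, hfx1⟩ := hpre (q1 : ℝ) ⟨q1, rfl⟩ (by linarith) hq1b
    obtain ⟨x2, ⟨hx2I, hx2X⟩, hfx2⟩ := hpre (q2 : ℝ) ⟨q2, rfl⟩ hq2a (by linarith)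
    rcases hαcase with hA1 | hA2 <;> rcases hβcase with hB1 | hB2
    · -- both endpoints map left: contradiction via q1
      exfalso
      have h1 := hne (a n) (haX n) x1 hx1X
      rw [hfx1, abs_of_nonpos (show a n - x1 ≤ 0 by linarith [hx1I.1]), neg_sub] at h1
      have h1' : (q1 : ℝ) - f (a n) ≤ x1 - a n := by
        linarith [abs_sub_le_iff.1 h1 |>.2]
      have h2 := hne (b n) (hbX n) x1 hx1X
      rw [hfx1, abs_of_nonneg (show (0:ℝ) ≤ b n - x1 by linarith [hx1I.2])] at h2
      have h2' : (q1 : ℝ) - f (b n) ≤ b n - x1 := by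
        linarith [abs_sub_le_iff.1 h2 |>.2]
      have hx1b := hx1I.2
      linarith
    · -- f(a n) left, f(b n) right: f is the identity on the interval
      have heq : f (a n) = a n ∧ f (b n) = b n := by
        have h1 : f (b n) - f (a n) ≤ b n - a n := by
          linarith [abs_sub_le_iff.1 hαβ |>.2]
        constructor <;> linarith
      left
      intro x ⟨hxI, hxX⟩
      have h1 := hne x hxX (a n) (haX n)
      rw [heq.1, abs_of_nonneg (show (0:ℝ) ≤ x - a n by linarith [hxI.1])] at h1
      have h2 := hne x hxX (b n) (hbX n)
      rw [heq.2, abs_of_nonpos (show x - b n ≤ 0 by linarith [hxI.2]), neg_sub] at h2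
      have h1' := abs_sub_le_iff.1 h1
      have h2' := abs_sub_le_iff.1 h2
      linarith [h1'.1, h1'.2, h2'.1, h2'.2]
    · -- f(a n) right, f(b n) left: f is the reflection on the interval
      have heq : f (a n) = b n ∧ f (b n) = a n := by
        have h1 : f (a n) - f (b n) ≤ b n - a n := by
          linarith [abs_sub_le_iff.1 hαβ |>.1]
        constructor <;> linarith
      right
      intro x ⟨hxI, hxX⟩
      have h1 := hne x hxX (a n) (haX n)
      rw [heq.1, abs_of_nonneg (show (0:ℝ) ≤ x - a n by linarith [hxI.1])] at h1
      have h2 := hne x hxX (b n) (hbX n)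
      rw [heq.2, abs_of_nonpos (show x - b n ≤ 0 by linarith [hxI.2]), neg_sub] at h2
      have h1' := abs_sub_le_iff.1 h1
      have h2' := abs_sub_le_iff.1 h2
      linarith [h1'.1, h1'.2, h2'.1, h2'.2]
    · -- both endpoints map right: contradiction via q2
      exfalso
      have h1 := hne (a n) (haX n) x2 hx2X
      rw [hfx2, abs_of_nonpos (show a n - x2 ≤ 0 by linarith [hx2I.1]), neg_sub] at h1
      have h1' : f (a n) - (q2 : ℝ) ≤ x2 - a n := by
        linarith [abs_sub_le_iff.1 h1 |>.1]
      have h2 := hne (b n) (hbX n) x2 hx2X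
      rw [hfx2, abs_of_nonneg (show (0:ℝ) ≤ b n - x2 by linarith [hx2I.2])] at h2
      have h2' : f (b n) - (q2 : ℝ) ≤ b n - x2 := by
        linarith [abs_sub_le_iff.1 h2 |>.1]
      linarith
  -- conclude
  intro n
  rcases main n with hid | hrefl
  · constructor
    · refine ⟨?_, ?_, ?_⟩
      · intro x hx
        rw [hid x hx]
        exact hx
      · intro x hx y hy hxy
        rwa [hid x hx, hid y hy] at hxy
      · intro y hy
        exact ⟨y, hy, hid y hy⟩
    · intro x hx y hy
      rw [hid x hx, hid y hy]
  · constructor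
    · refine ⟨?_, ?_, ?_⟩
      · intro x hx
        rw [hrefl x hx]
        exact ⟨⟨by linarith [hx.1.2], by linarith [hx.1.1]⟩, by
          rw [← hrefl x hx]; exact hbij.mapsTo hx.2⟩
      · intro x hx y hy hxy
        rw [hrefl x hx, hrefl y hy] at hxy
        linarith
      · intro y hy
        obtain ⟨r, hr⟩ := hXIcc n y hy.2 hy.1
        obtain ⟨ra, hra⟩ := haq n
        obtain ⟨rb, hrb⟩ := hbq n
        have hmemI : a n + b n - y ∈ Icc (a n) (b n) :=
          ⟨by linarith [hy.1.2], by linarith [hy.1.1]⟩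
        have hmemX : a n + b n - y ∈ X := by
          refine hQX n _ ⟨ra + rb - r, ?_⟩ hmemI
          push_cast
          rw [hra, hrb, hr]
        refine ⟨a n + b n - y, ⟨hmemI, hmemX⟩, ?_⟩
        rw [hrefl _ ⟨hmemI, hmemX⟩]
        ring
    · intro x hx y hy
      rw [hrefl x hx, hrefl y hy,
        show (a n + b n - x) - (a n + b n - y) = y - x by ring, abs_sub_comm]
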